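/- For all α in (0,1), the derivative with respect to α of the Shannon entropy H(P_α) (in bits) equals −α σ²_{3,α} · log₂ e, where σ²_{3,α} = Var_{P_α}(ln P(X)). -/

import Mathlib

open Finset

/-- The derivative in `α` of the Shannon entropy `H(P_α)` (in bits)
equals `-α σ²_{3,α} log₂ e`. -/
theorem deriv_entropy_tilted {A : Type*} [Fintype A] (P : A → ℝ)
    (hpos : ∀ a, 0 < P a) (hsum : ∑ a, P a = 1)
    (α : ℝ) (hα : α ∈ Set.Ioo (0 : ℝ) 1) :
    let Pa : ℝ → A → ℝ := fun b a => P a ^ b / ∑ y, P y ^ b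
    let H : ℝ → ℝ := fun b => -∑ a, Pa b a * Real.logb 2 (Pa b a)
    let m3 : ℝ := ∑ a, Pa α a * Real.log (P a)
    let σ3sq : ℝ := ∑ a, Pa α a * (Real.log (P a) - m3) ^ 2
    HasDerivAt H (-(α * σ3sq) * Real.logb 2 (Real.exp 1)) α := by
  intro Pa H m3 σ3sq
  set Z : ℝ → ℝ := fun b => ∑ a, P a ^ b with hZdef
  set G : ℝ → ℝ := fun b => ∑ a, P a ^ b * Real.log (P a) with hGdef
  set K : ℝ → ℝ := fun b => ∑ a, P a ^ b * Real.log (P a) ^ 2 with hKdef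
  have huniv : (Finset.univ : Finset A).Nonempty := by
    by_contra h
    rw [Finset.not_nonempty_iff_eq_empty] at h
    simp [h] at hsum
  have hZpos : ∀ b, 0 < Z b := fun b =>
    Finset.sum_pos (fun a _ => Real.rpow_pos_of_pos (hpos a) b) huniv
  have hZne : ∀ b, Z b ≠ 0 := fun b => ne_of_gt (hZpos b)
  have hlog2 : Real.log 2 ≠ 0 := ne_of_gt (Real.log_pos (by norm_num))
  -- H equals a nicer function
  have hPa : ∀ b a, Pa b a = P a ^ b / Z b := fun _ _ => rfl
  have hkey : ∀ b, ∑ a, Pa b a * Real.log (Pa b a)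
      = (b * G b - Real.log (Z b) * Z b) / Z b := by
    intro b
    calc ∑ a, Pa b a * Real.log (Pa b a)
        = ∑ a, (P a ^ b * (b * Real.log (P a)) - P a ^ b * Real.log (Z b)) / Z b := by
          refine Finset.sum_congr rfl fun a _ => ?_
          rw [hPa, Real.log_div (ne_of_gt (Real.rpow_pos_of_pos (hpos a) b)) (hZne b),
            Real.log_rpow (hpos a)]
          field_simp
      _ = (∑ a, (P a ^ b * (b * Real.log (P a)) - P a ^ b * Real.log (Z b))) / Z b := by
          rw [Finset.sum_div]
      _ = (b * G b - Real.log (Z b) * Z b) / Z b := by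
          rw [Finset.sum_sub_distrib]
          have h1 : ∑ a, P a ^ b * (b * Real.log (P a)) = b * G b := by
            rw [hGdef, Finset.mul_sum]
            exact Finset.sum_congr rfl fun a _ => by ring
          have h2 : ∑ a, P a ^ b * Real.log (Z b) = Real.log (Z b) * Z b := by
            rw [← Finset.sum_mul, mul_comm]
          rw [h1, h2]
  have hHeq : H = fun b => (Real.log (Z b) - b * (G b / Z b)) / Real.log 2 := by
    funext b
    show -∑ a, Pa b a * Real.logb 2 (Pa b a) = _
    have : ∑ a, Pa b a * Real.logb 2 (Pa b a)
        = (∑ a, Pa b a * Real.log (Pa b a)) / Real.log 2 := by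
      rw [Finset.sum_div]
      exact Finset.sum_congr rfl fun a _ => by rw [Real.logb]; ring
    rw [this, hkey]
    field_simp [hZne b]
    ring
  -- derivatives
  have hZd : ∀ b, HasDerivAt Z (G b) b := fun b =>
    HasDerivAt.fun_sum fun a _ => (Real.hasStrictDerivAt_const_rpow (hpos a) b).hasDerivAt
  have hGd : ∀ b, HasDerivAt G (K b) b := by
    intro b
    have : HasDerivAt G (∑ a, P a ^ b * Real.log (P a) * Real.log (P a)) b :=
      HasDerivAt.fun_sum fun a _ =>
        ((Real.hasStrictDerivAt_const_rpow (hpos a) b).hasDerivAt).mul_const (Real.log (P a))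
    convert this using 1
    rw [hKdef]
    exact Finset.sum_congr rfl fun a _ => by ring
  have hlogZ : HasDerivAt (fun b => Real.log (Z b)) (G α / Z α) α :=
    (hZd α).log (hZne α)
  have hdiv : HasDerivAt (fun b => G b / Z b)
      ((K α * Z α - G α * G α) / Z α ^ 2) α := (hGd α).div (hZd α) (hZne α)
  have hmul : HasDerivAt (fun b => b * (G b / Z b))
      (1 * (G α / Z α) + α * ((K α * Z α - G α * G α) / Z α ^ 2)) α :=
    (hasDerivAt_id α).mul hdiv
  have hfin : HasDerivAt (fun b => (Real.log (Z b) - b * (G b / Z b)) / Real.log 2)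
      ((G α / Z α - (1 * (G α / Z α) + α * ((K α * Z α - G α * G α) / Z α ^ 2)))
        / Real.log 2) α := (hlogZ.sub hmul).div_const _
  rw [hHeq]
  convert hfin using 1
  -- value equality
  have hPasum : ∑ a, Pa α a = 1 := by
    show ∑ a, P a ^ α / Z α = 1
    rw [← Finset.sum_div]
    exact div_self (hZne α)
  have hm3 : m3 = G α / Z α := by
    show ∑ a, P a ^ α / Z α * Real.log (P a) = _
    rw [hGdef, Finset.sum_div]
    exact Finset.sum_congr rfl fun a _ => by ring
  have hσ : σ3sq = K α / Z α - m3 ^ 2 := by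
    show ∑ a, Pa α a * (Real.log (P a) - m3) ^ 2 = _
    have : ∀ a, Pa α a * (Real.log (P a) - m3) ^ 2
        = Pa α a * Real.log (P a) ^ 2 - 2 * m3 * (Pa α a * Real.log (P a))
          + m3 ^ 2 * Pa α a := fun a => by ring
    rw [Finset.sum_congr rfl fun a _ => this a, Finset.sum_add_distrib,
      Finset.sum_sub_distrib, ← Finset.mul_sum, ← Finset.mul_sum, hPasum]
    have hKZ : ∑ a, Pa α a * Real.log (P a) ^ 2 = K α / Z α := by
      rw [hKdef, Finset.sum_div]
      exact Finset.sum_congr rfl fun a _ => by rw [hPa]; ring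
    rw [hKZ]
    show K α / Z α - 2 * m3 * m3 + m3 ^ 2 * 1 = _
    ring
  have hlogbe : Real.logb 2 (Real.exp 1) = 1 / Real.log 2 := by
    rw [Real.logb, Real.log_exp]
  rw [hσ, hm3, hlogbe]
  field_simp [hZne α]
  ring
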